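/- arXiv:2207.12828 — 2 statements merged into one kernel-verified Lean document; each statement's English description precedes it below -/
import Mathlib

section
/- Assume the Carlson–Simpson Lemma for all finite alphabets and numbers of colors: for every finite alphabet A and finite coloring of A^{<ω}, there is an ω-variable word W over A with {W[u] : u ∈ A^{<ω}} monochromatic. Then for every finite alphabet A, every ω-variable word W over A, every n, and every finite coloring f of the n+1-variable words, and every n-variable word s, there exists an ω-variable word Ŵ with Ŵ = W[V] for some ω-variable word V extending x₀⋯x_{|s|}, and a color i, such that for every (n+1)-variable word t having s⌢x_n as a prefix, f(Ŵ[t]) = i. -/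
/-- `W : ℕ → A ⊕ ℕ` (with `Sum.inl a` a letter and `Sum.inr j` the variable `x_j`)
is an ω-variable word over `A`, with `fo j` the first occurrence of `x_j`:
each variable occurs, `fo j` is its first occurrence, and first occurrences
are in increasing order of variable index. -/
def IsOmegaVW {A : Type*} (W : ℕ → A ⊕ ℕ) (fo : ℕ → ℕ) : Prop :=
  (∀ j, W (fo j) = Sum.inr j) ∧ (∀ j i, i < fo j → W i ≠ Sum.inr j) ∧
    (∀ j, fo j < fo (j + 1))

/-- `w` is an `n`-variable word over `A`: exactly the variables `x_j`, `j < n`,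
occur, each at least once, and the first occurrence of `x_{j+1}` is preceded by an
occurrence of `x_j` (so first occurrences are in increasing order of index). -/
def IsNVarWord {A : Type*} (n : ℕ) (w : List (A ⊕ ℕ)) : Prop :=
  (∀ j : ℕ, Sum.inr j ∈ w → j < n) ∧ (∀ j < n, Sum.inr j ∈ w) ∧
    (∀ i < w.length, ∀ j : ℕ, w[i]? = some (Sum.inr (j + 1)) →
      ∃ i' < i, w[i']? = some (Sum.inr j))

/-- The substitution `W[u]` of a finite (variable) word `u` into an ω-variable
word `W`: replace each occurrence of `x_j` (`j < |u|`) by `u(j)` and truncate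
just before the first occurrence of `x_{|u|}`. -/
def substW {A : Type*} (W : ℕ → A ⊕ ℕ) (fo : ℕ → ℕ) (u : List (A ⊕ ℕ)) :
    List (A ⊕ ℕ) :=
  (List.range (fo u.length)).map (fun i =>
    match W i with
    | Sum.inl a => Sum.inl a
    | Sum.inr j => u.getD j (Sum.inr j))



lemma substW_length {A : Type*} (W : ℕ → A ⊕ ℕ) (fo : ℕ → ℕ) (u : List (A ⊕ ℕ)) :
    (substW W fo u).length = fo u.length := by simp [substW]

lemma substW_getElem {A : Type*} (W : ℕ → A ⊕ ℕ) (fo : ℕ → ℕ) (u : List (A ⊕ ℕ))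
    (p : ℕ) (h : p < (substW W fo u).length) :
    (substW W fo u)[p] = (match W p with
      | Sum.inl a => Sum.inl a
      | Sum.inr j => u.getD j (Sum.inr j)) := by
  simp [substW]

lemma fo_le_of_eq {A : Type*} {W : ℕ → A ⊕ ℕ} {fo : ℕ → ℕ} (hW : IsOmegaVW W fo)
    {i j : ℕ} (h : W i = Sum.inr j) : fo j ≤ i :=
  le_of_not_gt fun hlt => hW.2.1 j i hlt h

lemma substW_comp {A : Type*} {W : ℕ → A ⊕ ℕ} {fo : ℕ → ℕ} (hW : IsOmegaVW W fo)
    (V : ℕ → A ⊕ ℕ) (foV : ℕ → ℕ) (t : List (A ⊕ ℕ)) :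
    substW (fun p => match W p with | Sum.inl a => Sum.inl a | Sum.inr j => V j)
      (fun k => fo (foV k)) t = substW W fo (substW V foV t) := by
  have foMono : StrictMono fo := strictMono_nat_of_lt_succ hW.2.2
  apply List.ext_getElem
  · simp [substW_length]
  · intro p h1 h2
    rw [substW_getElem, substW_getElem]
    have hp : p < fo (foV t.length) := by simpa [substW_length] using h1
    rcases hWp : W p with a | j
    · simp
    · simp only
      have hj : j < foV t.length := by
        have h1 : fo j ≤ p := fo_le_of_eq hW hWp
        have := lt_of_le_of_lt h1 hp
        exact foMono.lt_iff_lt.mp this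
      have hj' : j < (substW V foV t).length := by rwa [substW_length]
      rw [List.getD_eq_getElem _ _ hj', substW_getElem _ _ _ _ hj']

lemma isOmegaVW_comp {A : Type*} {W : ℕ → A ⊕ ℕ} {fo : ℕ → ℕ} (hW : IsOmegaVW W fo)
    {V : ℕ → A ⊕ ℕ} {foV : ℕ → ℕ} (hV : IsOmegaVW V foV) :
    IsOmegaVW (fun p => match W p with | Sum.inl a => Sum.inl a | Sum.inr j => V j)
      (fun k => fo (foV k)) := by
  have foMono : StrictMono fo := strictMono_nat_of_lt_succ hW.2.2
  refine ⟨fun k => ?_, fun k p hp hcon => ?_, fun k => ?_⟩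
  · show (match W (fo (foV k)) with | Sum.inl a => Sum.inl a | Sum.inr j => V j) = Sum.inr k
    rw [hW.1 (foV k)]
    exact hV.1 k
  · replace hp : p < fo (foV k) := hp
    rcases hWp : W p with a | j
    · simp [hWp] at hcon
    · simp only [hWp] at hcon
      have h1 : foV k ≤ j := le_of_not_gt fun hlt => hV.2.1 k j hlt hcon
      have h2 : fo (foV k) ≤ fo j := foMono.monotone h1
      have h3 : fo j ≤ p := fo_le_of_eq hW hWp
      omega
  · exact foMono (hV.2.2 k)

lemma substW_getElem?_inl {A : Type*} {W : ℕ → A ⊕ ℕ} {fo : ℕ → ℕ} {u : List (A ⊕ ℕ)}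
    {p : ℕ} {a : A} (hp : p < fo u.length) (hWp : W p = Sum.inl a) :
    (substW W fo u)[p]? = some (Sum.inl a) := by
  simp [substW, List.getElem?_map, List.getElem?_range hp, hWp]

lemma substW_getElem?_inr {A : Type*} {W : ℕ → A ⊕ ℕ} {fo : ℕ → ℕ} {u : List (A ⊕ ℕ)}
    {p j : ℕ} (hp : p < fo u.length) (hWp : W p = Sum.inr j) :
    (substW W fo u)[p]? = some (u.getD j (Sum.inr j)) := by
  simp [substW, List.getElem?_map, List.getElem?_range hp, hWp]

lemma substW_comp' {A : Type*} {W : ℕ → A ⊕ ℕ} {fo : ℕ → ℕ} (hW : IsOmegaVW W fo)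
    (V : ℕ → A ⊕ ℕ) (foV : ℕ → ℕ) (Wh : ℕ → A ⊕ ℕ)
    (hWh : ∀ p, Wh p = match W p with | Sum.inl a => Sum.inl a | Sum.inr j => V j)
    (t : List (A ⊕ ℕ)) :
    substW Wh (fun k => fo (foV k)) t = substW W fo (substW V foV t) := by
  have h : Wh = fun p => match W p with | Sum.inl a => Sum.inl a | Sum.inr j => V j :=
    funext hWh
  rw [h]
  exact substW_comp hW V foV t

lemma isOmegaVW_comp' {A : Type*} {W : ℕ → A ⊕ ℕ} {fo : ℕ → ℕ} (hW : IsOmegaVW W fo)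
    {V : ℕ → A ⊕ ℕ} {foV : ℕ → ℕ} (hV : IsOmegaVW V foV) (Wh : ℕ → A ⊕ ℕ)
    (hWh : ∀ p, Wh p = match W p with | Sum.inl a => Sum.inl a | Sum.inr j => V j) :
    IsOmegaVW Wh (fun k => fo (foV k)) := by
  have h : Wh = fun p => match W p with | Sum.inl a => Sum.inl a | Sum.inr j => V j :=
    funext hWh
  rw [h]
  exact isOmegaVW_comp hW hV

theorem stmt_12 {A : Type} [Fintype A]
    (csl : ∀ (B : Type) [Fintype B], ∀ (ℓ : ℕ) (c : List (B ⊕ ℕ) → Fin ℓ),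
      ∃ (W : ℕ → B ⊕ ℕ) (fo : ℕ → ℕ), IsOmegaVW W fo ∧
        ∃ i : Fin ℓ, ∀ u : List B, c (substW W fo (u.map Sum.inl)) = i)
    (W : ℕ → A ⊕ ℕ) (fo : ℕ → ℕ) (hW : IsOmegaVW W fo)
    (n ℓ : ℕ) (f : List (A ⊕ ℕ) → Fin ℓ)
    (s : List (A ⊕ ℕ)) (hs : IsNVarWord n s) :
    ∃ (V : ℕ → A ⊕ ℕ) (foV : ℕ → ℕ) (Wh : ℕ → A ⊕ ℕ) (foWh : ℕ → ℕ),
      IsOmegaVW V foV ∧ (∀ j ≤ s.length, V j = Sum.inr j) ∧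
      IsOmegaVW Wh foWh ∧
      (∀ i, Wh i = match W i with
        | Sum.inl a => Sum.inl a
        | Sum.inr j => V j) ∧
      ∃ i : Fin ℓ, ∀ t : List (A ⊕ ℕ), IsNVarWord (n + 1) t →
        (s ++ [Sum.inr n]) <+: t → f (substW Wh foWh t) = i := by
  classical
  set m := s.length + 1 with hm
  set s1 : List (A ⊕ ℕ) := s ++ [Sum.inr n] with hs1
  have hs1len : s1.length = m := by simp [hs1, hm]
  -- positions of the variables x_k, k ≤ n, inside s1
  have hqex : ∀ k : Fin (n + 1), ∃ p, p < m ∧ s1[p]? = some (Sum.inr (k : ℕ)) := by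
    intro k
    rcases eq_or_lt_of_le (Nat.lt_succ_iff.mp k.2) with h | h
    · refine ⟨s.length, by omega, ?_⟩
      rw [hs1, List.getElem?_append_right (le_refl _), Nat.sub_self, h]
      rfl
    · obtain ⟨p, hp, hpe⟩ := List.mem_iff_getElem.mp (hs.2.1 _ h)
      refine ⟨p, by omega, ?_⟩
      rw [hs1, List.getElem?_append_left hp, List.getElem?_eq_getElem hp, hpe]
  choose q hqlt hqval using hqex
  -- encoding / decoding between A ⊕ ℕ and the new alphabet B = A ⊕ Fin (n+1)
  set e : A ⊕ ℕ → A ⊕ Fin (n + 1) := fun x => match x with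
    | Sum.inl a => Sum.inl a
    | Sum.inr k => Sum.inr ⟨min k n, by omega⟩ with he
  set dec : (A ⊕ Fin (n + 1)) ⊕ ℕ → A ⊕ ℕ := fun x => match x with
    | Sum.inl (Sum.inl a) => Sum.inl a
    | Sum.inl (Sum.inr k) => Sum.inr (k : ℕ)
    | Sum.inr j => Sum.inr (m + j) with hdec
  set c : List ((A ⊕ Fin (n + 1)) ⊕ ℕ) → Fin ℓ :=
    fun w => f (substW W fo (s1 ++ w.map dec)) with hc
  obtain ⟨U, foU, hU, i, hi⟩ := csl (A ⊕ Fin (n + 1)) ℓ c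
  have foUMono : StrictMono foU := strictMono_nat_of_lt_succ hU.2.2
  -- the new ω-variable word V
  set V : ℕ → A ⊕ ℕ := fun p => if p < m then Sum.inr p else
    match U (p - m) with
    | Sum.inl (Sum.inl a) => Sum.inl a
    | Sum.inl (Sum.inr k) => Sum.inr (q k)
    | Sum.inr j => Sum.inr (m + j) with hV
  set foV : ℕ → ℕ := fun k => if k < m then k else m + foU (k - m) with hfoV
  have hVlow : ∀ p < m, V p = Sum.inr p := fun p hp => by simp [hV, hp]
  have hVshift : ∀ p, V (m + p) = match U p with
    | Sum.inl (Sum.inl a) => Sum.inl a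
    | Sum.inl (Sum.inr k) => Sum.inr (q k)
    | Sum.inr j => Sum.inr (m + j) := by
    intro p
    have h' : ¬ m + p < m := by omega
    simp only [hV, h', if_false, Nat.add_sub_cancel_left]
  have hfoVlow : ∀ k < m, foV k = k := fun k hk => by simp [hfoV, hk]
  have hfoVhigh : ∀ k, foV (m + k) = m + foU k := fun k => by
    have h' : ¬ m + k < m := by omega
    simp [hfoV, h']
  have hVomega : IsOmegaVW V foV := by
    refine ⟨fun k => ?_, fun k p hp hcon => ?_, fun k => ?_⟩
    · by_cases hk : k < m
      · rw [hfoVlow k hk]; exact hVlow k hk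
      · have hk' : k = m + (k - m) := by omega
        rw [hk', hfoVhigh, hVshift, hU.1]
    · by_cases hk : k < m
      · rw [hfoVlow k hk] at hp
        rw [hVlow p (by omega)] at hcon
        exact absurd (Sum.inr.inj hcon) (by omega)
      · rw [show foV k = m + foU (k - m) from by
          simp [hfoV, hk]] at hp
        by_cases hpm : p < m
        · rw [hVlow p hpm] at hcon
          exact absurd (Sum.inr.inj hcon) (by omega)
        · have hp' : p = m + (p - m) := by omega
          rw [hp', hVshift] at hcon
          have hplt : p - m < foU (k - m) := by omega
          have hne : U (p - m) ≠ Sum.inr (k - m) := hU.2.1 _ _ hplt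
          rcases hU' : U (p - m) with b | j
          · rcases b with a | kk
            · simp [hU'] at hcon
            · simp only [hU'] at hcon
              have := hqlt kk
              exact absurd (Sum.inr.inj hcon) (by omega)
          · simp only [hU'] at hcon
            rw [hU'] at hne
            have : j ≠ k - m := fun h => hne (by rw [h])
            exact absurd (Sum.inr.inj hcon) (by omega)
    · by_cases hk : k + 1 < m
      · rw [hfoVlow k (by omega), hfoVlow (k + 1) hk]; omega
      · by_cases hk' : k < m
        · rw [hfoVlow k hk', show k + 1 = m + 0 from by omega, hfoVhigh]; omega
        · rw [show k = m + (k - m) from by omega, hfoVhigh,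
            show m + (k - m) + 1 = m + (k - m + 1) from by omega, hfoVhigh]
          have := hU.2.2 (k - m)
          omega
  have foVMono : StrictMono foV := strictMono_nat_of_lt_succ hVomega.2.2
  set Wh : ℕ → A ⊕ ℕ := fun p => match W p with
    | Sum.inl a => Sum.inl a
    | Sum.inr j => V j with hWhdef
  set foWh : ℕ → ℕ := fun k => fo (foV k) with hfoWhdef
  have hWhmatch : ∀ p, Wh p = match W p with
    | Sum.inl a => Sum.inl a
    | Sum.inr j => V j := fun _ => rfl
  refine ⟨V, foV, Wh, foWh, hVomega, fun j hj => hVlow j (by omega),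
    isOmegaVW_comp' hW hVomega Wh hWhmatch, fun _ => rfl, i, fun t ht hpre => ?_⟩
  obtain ⟨r, rfl⟩ := hpre
  set u : List (A ⊕ Fin (n + 1)) := r.map e with hu
  have hulen : (u.map (Sum.inl : A ⊕ Fin (n + 1) → (A ⊕ Fin (n + 1)) ⊕ ℕ)).length = r.length := by
    simp [hu]
  have hlen : (s1 ++ r).length = m + r.length := by simp [hs1len]
  have hK : foV (s1 ++ r).length = m + foU r.length := by
    rw [hlen]; exact hfoVhigh r.length
  have key : substW V foV (s1 ++ r) = s1 ++ (substW U foU (u.map Sum.inl)).map dec := by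
    apply List.ext_getElem?
    intro p
    by_cases hbig : m + foU r.length ≤ p
    · rw [List.getElem?_eq_none, List.getElem?_eq_none]
      · rw [List.length_append, List.length_map, substW_length, hs1len, hulen]; omega
      · rw [substW_length, hK]; omega
    · push_neg at hbig
      have hp1 : p < foV (s1 ++ r).length := by omega
      by_cases hpm : p < m
      · rw [substW_getElem?_inr hp1 (hVlow p hpm),
          List.getElem?_append_left (show p < s1.length by omega),
          List.getD_eq_getElem?_getD,
          List.getElem?_append_left (show p < s1.length by omega),
          List.getElem?_eq_getElem (show p < s1.length by omega)]
        rfl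
      · obtain ⟨p', rfl⟩ : ∃ p', p = m + p' := ⟨p - m, by omega⟩
        have hp' : p' < foU r.length := by omega
        have hp'' : p' < foU (u.map (Sum.inl :
            A ⊕ Fin (n + 1) → (A ⊕ Fin (n + 1)) ⊕ ℕ)).length := by rwa [hulen]
        rw [List.getElem?_append_right (show s1.length ≤ m + p' by omega),
          hs1len, Nat.add_sub_cancel_left, List.getElem?_map]
        rcases hU' : U p' with b | j
        · rcases b with a | k
          · have hVp : V (m + p') = Sum.inl a := by rw [hVshift, hU']
            rw [substW_getElem?_inl hp1 hVp, substW_getElem?_inl hp'' hU']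
            rfl
          · have hVp : V (m + p') = Sum.inr (q k) := by rw [hVshift, hU']
            rw [substW_getElem?_inr hp1 hVp, substW_getElem?_inl hp'' hU']
            have hqs : q k < s1.length := by have := hqlt k; omega
            rw [List.getD_eq_getElem?_getD,
              List.getElem?_append_left hqs, hqval k]
            rfl
          -- case U p' = Sum.inr j
        · have hVp : V (m + p') = Sum.inr (m + j) := by rw [hVshift, hU']
          have hfoj : foU j ≤ p' := fo_le_of_eq hU hU'
          have hj : j < r.length := foUMono.lt_iff_lt.mp (by omega)
          rw [substW_getElem?_inr hp1 hVp, substW_getElem?_inr hp'' hU']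
          rw [List.getD_eq_getElem?_getD,
            List.getElem?_append_right (show s1.length ≤ m + j by omega),
            hs1len, Nat.add_sub_cancel_left,
            List.getElem?_eq_getElem hj,
            List.getD_eq_getElem?_getD,
            List.getElem?_eq_getElem (show j < (u.map (Sum.inl :
              A ⊕ Fin (n + 1) → (A ⊕ Fin (n + 1)) ⊕ ℕ)).length by omega),
            List.getElem_map]
          have hju : j < u.length := by rw [hu, List.length_map]; omega
          have huj : u[j]'hju = e (r[j]'hj) := List.getElem_map e
          rw [huj]
          rcases hr' : r[j] with a | k
          · rfl
          · have hk : k < n + 1 := by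
              apply ht.1
              exact List.mem_append_right _ (hr' ▸ r.getElem_mem _)
            show some (Sum.inr k) = some (dec (Sum.inl (e (Sum.inr k))))
            simp only [he, hdec]
            rw [Option.some.injEq]
            show _ = Sum.inr (min k n)
            rw [min_eq_left (by omega)]
  have comp : substW Wh foWh (s1 ++ r) = substW W fo (substW V foV (s1 ++ r)) :=
    substW_comp' hW V foV Wh hWhmatch (s1 ++ r)
  rw [comp, key]
  exact hi u
end

section
/- The Combinatorial Dual Ramsey theorem for all dimensions implies the Higher-order Carlson–Simpson Lemma for all parameters: if for all n, ℓ ≥ 2, every ℓ-coloring of the (n−1)-variable words over the empty alphabet admits a monochromatic set {W[u] : u an (n−1)-variable word} for some ω-variable word W over ∅, then for all n, k, ℓ, every ℓ-coloring of the n-variable words over a k-letter alphabet A admits an ω-variable word W over A with {W[u] : u ∈ A^{<ω,n}} monochromatic. -/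
/-- `u` is an `m`-variable word over the empty alphabet: a list of variable
indices in which exactly the indices `j < m` occur, each at least once, with the
first occurrence of `j+1` preceded by an occurrence of `j`. -/
def IsMVarWordE (m : ℕ) (u : List ℕ) : Prop :=
  (∀ j ∈ u, j < m) ∧ (∀ j < m, j ∈ u) ∧
    (∀ i < u.length, ∀ j : ℕ, u[i]? = some (j + 1) → ∃ i' < i, u[i']? = some j)

/-- `W : ℕ → ℕ` is an ω-variable word over the empty alphabet, with `fo j`
the first occurrence of the variable `x_j`, first occurrences being ordered. -/
def IsOmegaVWE (W : ℕ → ℕ) (fo : ℕ → ℕ) : Prop :=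
  (∀ j, W (fo j) = j) ∧ (∀ j i, i < fo j → W i ≠ j) ∧ (∀ j, fo j < fo (j + 1))

/-- Substitution over the empty alphabet: replace each occurrence of `x_j`
(`j < |u|`) by `u(j)` and truncate just before the first occurrence of `x_{|u|}`. -/
def substE (W : ℕ → ℕ) (fo : ℕ → ℕ) (u : List ℕ) : List ℕ :=
  (List.range (fo u.length)).map (fun i => u.getD (W i) (W i))

section Aux

variable {A : Type} (k : ℕ) (e : A ≃ Fin k)

def toA : ℕ → A ⊕ ℕ := fun j => if h : j < k then Sum.inl (e.symm ⟨j, h⟩) else Sum.inr (j - k)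

def encA : A ⊕ ℕ → ℕ := Sum.elim (fun a => (e a).val) (fun m => m + k)

lemma toA_encA (s : A ⊕ ℕ) : toA k e (encA k e s) = s := by
  cases s with
  | inl a => simp [toA, encA, (e a).isLt]
  | inr m => simp [toA, encA, Nat.not_lt.mpr (Nat.le_add_left k m)]

lemma aux_mvar (n : ℕ) (u : List (A ⊕ ℕ)) (hu : IsNVarWord n u) :
    IsMVarWordE (n + k) (List.range k ++ u.map (encA k e)) := by
  obtain ⟨h1, h2, h3⟩ := hu
  refine ⟨?_, ?_, ?_⟩
  · intro j hj
    rcases List.mem_append.1 hj with h | h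
    · have := List.mem_range.1 h; omega
    · obtain ⟨s, hs, rfl⟩ := List.mem_map.1 h
      cases s with
      | inl a => have := (e a).isLt; simp only [encA, Sum.elim_inl]; omega
      | inr t => have := h1 t hs; simp only [encA, Sum.elim_inr]; omega
  · intro j hj
    by_cases hjk : j < k
    · exact List.mem_append.2 (Or.inl (List.mem_range.2 hjk))
    · refine List.mem_append.2 (Or.inr ?_)
      refine List.mem_map.2 ⟨Sum.inr (j - k), h2 (j - k) (by omega), ?_⟩
      simp only [encA, Sum.elim_inr]; omega
  · intro i hi j hij
    have hlen : (List.range k ++ u.map (encA k e)).length = k + u.length := by simp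
    by_cases hik : i < k
    · rw [List.getElem?_append_left (by simpa using hik), List.getElem?_range hik] at hij
      have hji : j + 1 = i := by exact_mod_cast (Option.some_inj.1 hij).symm
      refine ⟨j, by omega, ?_⟩
      rw [List.getElem?_append_left (by simp; omega), List.getElem?_range (by omega)]
    · have hik' : k ≤ i := Nat.not_lt.1 hik
      rw [List.getElem?_append_right (by simpa using hik'), List.getElem?_map] at hij
      simp only [List.length_range] at hij
      obtain ⟨s, hs, hsv⟩ := Option.map_eq_some_iff.1 hij
      have hiu : i - k < u.length := by rw [hlen] at hi; omega
      cases s with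
      | inl a =>
        have hak : (e a).val < k := (e a).isLt
        simp only [encA, Sum.elim_inl] at hsv
        refine ⟨j, by omega, ?_⟩
        rw [List.getElem?_append_left (by simp; omega), List.getElem?_range (by omega)]
      | inr t =>
        simp only [encA, Sum.elim_inr] at hsv
        rcases t with _ | t₀
        · -- j + 1 = k
          refine ⟨j, by omega, ?_⟩
          rw [List.getElem?_append_left (by simp; omega), List.getElem?_range (by omega)]
        · obtain ⟨i₀, hi₀, hgi₀⟩ := h3 (i - k) hiu t₀ (by rw [hs])
          refine ⟨i₀ + k, by omega, ?_⟩
          rw [List.getElem?_append_right (by simp), List.getElem?_map]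
          simp only [List.length_range, Nat.add_sub_cancel, hgi₀, Option.map_some]
          simp only [encA, Sum.elim_inr]
          congr 1
          omega

lemma getD_pt (u : List (A ⊕ ℕ)) (m : ℕ) :
    (match toA k e m with
      | Sum.inl a => Sum.inl a
      | Sum.inr j => u.getD j (Sum.inr j))
    = toA k e ((List.range k ++ u.map (encA k e)).getD m m) := by
  rw [List.getD_eq_getElem?_getD]
  by_cases hmk : m < k
  · rw [List.getElem?_append_left (by simpa using hmk), List.getElem?_range hmk]
    simp [toA, hmk]
  · have hk : k ≤ m := Nat.not_lt.1 hmk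
    rw [List.getElem?_append_right (by simpa using hk), List.getElem?_map]
    simp only [List.length_range]
    by_cases hmu : m - k < u.length
    · rw [List.getElem?_eq_getElem hmu]
      simp only [Option.map_some, Option.getD_some, toA_encA]
      simp only [toA, dif_neg hmk]
      exact List.getD_eq_getElem _ _ hmu
    · rw [List.getElem?_eq_none (by omega)]
      simp only [Option.map_none, Option.getD_none, toA, dif_neg hmk]
      exact List.getD_eq_default _ _ (by omega)

lemma substW_eq (W' fo' : ℕ → ℕ) (u : List (A ⊕ ℕ)) :
    substW (fun i => toA k e (W' i)) (fun j => fo' (j + k)) u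
      = (substE W' fo' (List.range k ++ u.map (encA k e))).map (toA k e) := by
  unfold substW substE
  rw [List.map_map]
  have hlen : (List.range k ++ u.map (encA k e)).length = u.length + k := by
    simp [Nat.add_comm]
  rw [hlen]
  apply List.map_congr_left
  intro i _
  exact getD_pt k e u (W' i)

end Aux
theorem stmt_15
    (cdrt : ∀ n ℓ : ℕ, 2 ≤ n → 2 ≤ ℓ → ∀ c : List ℕ → Fin ℓ,
      ∃ (W : ℕ → ℕ) (fo : ℕ → ℕ), IsOmegaVWE W fo ∧
        ∃ i : Fin ℓ, ∀ u : List ℕ, IsMVarWordE (n - 1) u → c (substE W fo u) = i) :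
    ∀ (n k ℓ : ℕ) (A : Type) [Fintype A], Fintype.card A = k →
      ∀ c : List (A ⊕ ℕ) → Fin ℓ,
        ∃ (W : ℕ → A ⊕ ℕ) (fo : ℕ → ℕ), IsOmegaVW W fo ∧
          ∃ i : Fin ℓ, ∀ u : List (A ⊕ ℕ), IsNVarWord n u →
            c (substW W fo u) = i := by
  intro n k ℓ A _ hcard c
  by_cases hnk : n + k = 0
  · -- degenerate case: n = 0 and the alphabet is empty
    have hk0 : k = 0 := by omega
    have hn0 : n = 0 := by omega
    haveI : IsEmpty A := Fintype.card_eq_zero_iff.1 (by omega)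
    refine ⟨fun i => Sum.inr i, id, ⟨fun j => rfl, ?_, fun j => Nat.lt_succ_self j⟩,
      c (substW (fun i => Sum.inr i) id []), ?_⟩
    · intro j i hij hc
      exact Nat.ne_of_lt hij (Sum.inr.inj hc)
    · intro u hu
      have hu0 : u = [] := by
        cases u with
        | nil => rfl
        | cons a t =>
          cases a with
          | inl a => exact (IsEmpty.false a).elim
          | inr j =>
            have := hu.1 j (List.mem_cons_self)
            omega
      rw [hu0]
  · -- main case
    have e : A ≃ Fin k := Fintype.equivFinOfCardEq hcard
    have hle : ℓ ≤ ℓ + 2 := by omega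
    obtain ⟨W', fo', hW', i', hmono⟩ :=
      cdrt (n + k + 1) (ℓ + 2) (by omega) (by omega)
        (fun v => Fin.castLE hle (c (v.map (toA k e))))
    refine ⟨fun i => toA k e (W' i), fun j => fo' (j + k), ⟨?_, ?_, ?_⟩, ?_⟩
    · intro j
      have h1 := hW'.1 (j + k)
      simp only [h1, toA, dif_neg (by omega : ¬ j + k < k)]
      congr 1
      omega
    · intro j i hi hc
      by_cases h : W' i < k
      · simp only [toA, dif_pos h] at hc
        exact Sum.inl_ne_inr hc
      · simp only [toA, dif_neg h] at hc
        have : W' i = j + k := by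
          have := Sum.inr.inj hc; omega
        exact hW'.2.1 (j + k) i hi this
    · intro j
      have := hW'.2.2 (j + k)
      have h2 : j + k + 1 = j + 1 + k := by omega
      rwa [h2] at this
    · have key : ∀ v : List (A ⊕ ℕ), IsNVarWord n v →
          Fin.castLE hle (c (substW (fun i => toA k e (W' i)) (fun j => fo' (j + k)) v)) = i' := by
        intro v hv
        have h1 := hmono (List.range k ++ v.map (encA k e))
          (by simpa using aux_mvar k e n v hv)
        rw [substW_eq]
        exact h1
      set u₀ : List (A ⊕ ℕ) := (List.range n).map Sum.inr with hu₀def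
      have hu₀ : IsNVarWord n u₀ := by
        refine ⟨?_, ?_, ?_⟩
        · intro j hj
          obtain ⟨t, ht, htv⟩ := List.mem_map.1 hj
          have := Sum.inr.inj htv
          subst this
          exact List.mem_range.1 ht
        · intro j hj
          exact List.mem_map.2 ⟨j, List.mem_range.2 hj, rfl⟩
        · intro i hi j hij
          rw [List.getElem?_map] at hij
          obtain ⟨t, ht, htv⟩ := Option.map_eq_some_iff.1 hij
          have hiu : i < n := by simpa [hu₀def] using hi
          rw [List.getElem?_range hiu] at ht
          have hti : t = i := by exact_mod_cast Option.some_inj.1 ht.symm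
          have := Sum.inr.inj htv
          refine ⟨j, by omega, ?_⟩
          rw [List.getElem?_map, List.getElem?_range (by omega)]
          rfl
      refine ⟨c (substW (fun i => toA k e (W' i)) (fun j => fo' (j + k)) u₀), ?_⟩
      intro u hu
      exact Fin.castLE_injective hle ((key u hu).trans (key u₀ hu₀).symm)
end
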